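/- The logical-entropy-based minimum-weight distance satisfies δ_h(P,Q) = 2·h(P ⊓ Q) − h(P) − h(Q) for all partitions P, Q of Fin n (n ≥ 1), where h is the logical entropy h(P) = (n·(n−1) − 2·s(P))/n² and δ_h is the minimum-weight walk distance in the Hasse-diagram graph with edge weights given by differences of h. -/

import Mathlib

open scoped BigOperators
open scoped symmDiff

/-- The size `s(P)` of a partition `P` of `Fin n`: the number of unordered pairs
`{i,j}` of distinct elements of `Fin n` that are `P`-equivalent (counted as
ordered pairs `(i,j)` with `i < j`). -/
noncomputable def partSize (n : ℕ) (P : Setoid (Fin n)) : ℕ :=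
  Set.ncard {p : Fin n × Fin n | p.1 < p.2 ∧ P.r p.1 p.2}

/-- The Hasse-diagram graph of the partition lattice: `P` and `Q` are adjacent
iff one covers the other. -/
def hasse (n : ℕ) : SimpleGraph (Setoid (Fin n)) where
  Adj P Q := P ⋖ Q ∨ Q ⋖ P
  symm := ⟨fun P Q h => h.symm⟩
  loopless := ⟨fun P h => by cases h with
    | inl h => exact lt_irrefl P h.lt
    | inr h => exact lt_irrefl P h.lt⟩

/-- The weight of an edge `{P,Q}` induced by `f`: `|f(P) - f(Q)|`. -/
noncomputable def eWeight {n : ℕ} (f : Setoid (Fin n) → ℝ) : Sym2 (Setoid (Fin n)) → ℝ :=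
  Sym2.lift ⟨fun P Q => |f P - f Q|, fun P Q => abs_sub_comm (f P) (f Q)⟩

/-- The weight of a walk in the Hasse diagram: the sum of its edge weights. -/
noncomputable def walkWeight {n : ℕ} (f : Setoid (Fin n) → ℝ) {P Q : Setoid (Fin n)}
    (W : (hasse n).Walk P Q) : ℝ :=
  (W.edges.map (eWeight f)).sum

/-- The minimum-`f`-weight distance `δ_f(P,Q)`: the minimum weight of a walk
from `P` to `Q` in the Hasse diagram. -/
noncomputable def deltaW {n : ℕ} (f : Setoid (Fin n) → ℝ) (P Q : Setoid (Fin n)) : ℝ :=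
  sInf {w : ℝ | ∃ W : (hasse n).Walk P Q, walkWeight f W = w}

/-- Logical entropy of a partition: `h(P) = (n(n-1) - 2 s(P)) / n²`. -/
noncomputable def logicalEntropy (n : ℕ) (P : Setoid (Fin n)) : ℝ :=
  ((n * (n - 1) : ℝ) - 2 * (partSize n P : ℝ)) / (n ^ 2 : ℝ)

/-! ### Auxiliary definitions and lemmas -/

instance setoidFinite (n : ℕ) : Finite (Setoid (Fin n)) :=
  Finite.of_injective (fun P : Setoid (Fin n) => ⇑P) fun _ _ h => Setoid.eq_iff_rel_eq.2 h

noncomputable def pairs (n : ℕ) (P : Setoid (Fin n)) : Finset (Fin n × Fin n) :=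
  @Finset.filter _ (fun p => p.1 < p.2 ∧ P.r p.1 p.2) (Classical.decPred _) Finset.univ

lemma partSize_eq (n : ℕ) (P : Setoid (Fin n)) : partSize n P = (pairs n P).card := by
  classical
  rw [partSize, ← Set.ncard_coe_finset]
  congr 1
  ext p
  simp [pairs]

lemma pairs_mono {n : ℕ} {P Q : Setoid (Fin n)} (h : P ≤ Q) : pairs n P ⊆ pairs n Q := by
  classical
  intro p hp
  simp only [pairs, Finset.mem_filter] at hp ⊢
  exact ⟨hp.1, hp.2.1, h hp.2.2⟩

lemma pairs_inf (n : ℕ) (P Q : Setoid (Fin n)) :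
    pairs n (P ⊓ Q) = pairs n P ∩ pairs n Q := by
  classical
  ext p
  simp only [pairs, Finset.mem_filter, Finset.mem_inter]
  constructor
  · rintro ⟨h1, h2, h3⟩
    exact ⟨⟨h1, h2, h3.1⟩, ⟨h1, h2, h3.2⟩⟩
  · rintro ⟨⟨h1, h2, h3⟩, ⟨_, _, h4⟩⟩
    exact ⟨h1, h2, h3, h4⟩

lemma logicalEntropy_eq (n : ℕ) (P : Setoid (Fin n)) :
    logicalEntropy n P =
      ((n * (n - 1) : ℝ) - 2 * ((pairs n P).card : ℝ)) / (n ^ 2 : ℝ) := by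
  rw [logicalEntropy, partSize_eq]

lemma entropy_sub {n : ℕ} (P Q : Setoid (Fin n)) :
    logicalEntropy n P - logicalEntropy n Q =
      2 * (((pairs n Q).card : ℝ) - ((pairs n P).card : ℝ)) / (n ^ 2 : ℝ) := by
  rw [logicalEntropy_eq, logicalEntropy_eq, div_sub_div_same]
  ring_nf

lemma entropy_anti {n : ℕ} (hn : 1 ≤ n) {P Q : Setoid (Fin n)} (h : P ≤ Q) :
    logicalEntropy n Q ≤ logicalEntropy n P := by
  have hpos : (0 : ℝ) < (n : ℝ) ^ 2 := by positivity
  have hcard : ((pairs n P).card : ℝ) ≤ ((pairs n Q).card : ℝ) := by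
    exact_mod_cast Finset.card_le_card (pairs_mono h)
  rw [logicalEntropy_eq, logicalEntropy_eq]
  exact div_le_div_of_nonneg_right (by linarith) hpos.le

/-- weight of an edge between comparable setoids. -/
lemma weight_of_le {n : ℕ} (hn : 1 ≤ n) {A B : Setoid (Fin n)} (h : A ≤ B) :
    |logicalEntropy n A - logicalEntropy n B| =
      2 / ((n : ℝ) ^ 2) * (((pairs n A) ∆ (pairs n B)).card : ℝ) := by
  have hsub : pairs n A ⊆ pairs n B := pairs_mono h
  have h1 : (pairs n A) ∆ (pairs n B) = pairs n B \ pairs n A := symmDiff_of_le hsub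
  have hcard : (((pairs n A) ∆ (pairs n B)).card : ℝ) =
      ((pairs n B).card : ℝ) - ((pairs n A).card : ℝ) := by
    rw [h1, Finset.card_sdiff_of_subset hsub]
    have := Finset.card_le_card hsub
    push_cast [Nat.cast_sub this]
    ring
  rw [abs_of_nonneg (by linarith [entropy_anti hn h]), entropy_sub, hcard]
  ring

lemma adj_weight {n : ℕ} (hn : 1 ≤ n) {A B : Setoid (Fin n)} (hAB : (hasse n).Adj A B) :
    |logicalEntropy n A - logicalEntropy n B| =
      2 / ((n : ℝ) ^ 2) * (((pairs n A) ∆ (pairs n B)).card : ℝ) := by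
  rcases (show A ⋖ B ∨ B ⋖ A from hAB) with h | h
  · exact weight_of_le hn h.lt.le
  · rw [abs_sub_comm, symmDiff_comm]
    exact weight_of_le hn h.lt.le

lemma walkWeight_nil {n : ℕ} (f : Setoid (Fin n) → ℝ) (A : Setoid (Fin n)) :
    walkWeight f (SimpleGraph.Walk.nil : (hasse n).Walk A A) = 0 := by
  simp [walkWeight]

lemma walkWeight_cons {n : ℕ} (f : Setoid (Fin n) → ℝ) {A B C : Setoid (Fin n)}
    (h : (hasse n).Adj A B) (W : (hasse n).Walk B C) :
    walkWeight f (SimpleGraph.Walk.cons h W) = |f A - f B| + walkWeight f W := by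
  simp [walkWeight, SimpleGraph.Walk.edges_cons, eWeight]

lemma walkWeight_append {n : ℕ} (f : Setoid (Fin n) → ℝ) {A B C : Setoid (Fin n)}
    (W1 : (hasse n).Walk A B) (W2 : (hasse n).Walk B C) :
    walkWeight f (W1.append W2) = walkWeight f W1 + walkWeight f W2 := by
  simp [walkWeight, SimpleGraph.Walk.edges_append]

lemma walkWeight_reverse {n : ℕ} (f : Setoid (Fin n) → ℝ) {A B : Setoid (Fin n)}
    (W : (hasse n).Walk A B) :
    walkWeight f W.reverse = walkWeight f W := by
  simp [walkWeight, SimpleGraph.Walk.edges_reverse, List.map_reverse, List.sum_reverse]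

/-- Lower bound for the weight of any walk. -/
lemma walk_lb {n : ℕ} (hn : 1 ≤ n) {A B : Setoid (Fin n)} (W : (hasse n).Walk A B) :
    2 / ((n : ℝ) ^ 2) * (((pairs n A) ∆ (pairs n B)).card : ℝ)
      ≤ walkWeight (logicalEntropy n) W := by
  induction W with
  | nil => simp [walkWeight_nil, symmDiff_self]
  | @cons u v w h W ih =>
    rw [walkWeight_cons]
    have htri : ((pairs n u) ∆ (pairs n w)).card ≤
        ((pairs n u) ∆ (pairs n v)).card + ((pairs n v) ∆ (pairs n w)).card := by
      refine le_trans (Finset.card_le_card (symmDiff_triangle (pairs n u) (pairs n v) (pairs n w))) ?_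
      exact Finset.card_union_le _ _
    have hpos : (0 : ℝ) ≤ 2 / ((n : ℝ) ^ 2) := by positivity
    have h1 := adj_weight hn h
    have h2 : (((pairs n u) ∆ (pairs n w)).card : ℝ) ≤
        (((pairs n u) ∆ (pairs n v)).card : ℝ) + (((pairs n v) ∆ (pairs n w)).card : ℝ) := by
      exact_mod_cast htri
    nlinarith [ih, mul_le_mul_of_nonneg_left h2 hpos]

/-- There is a walk from any `S` down to any finer `R`, with telescoping weight. -/
lemma exists_walk_down {n : ℕ} (hn : 1 ≤ n) (R : Setoid (Fin n)) :
    ∀ k (S : Setoid (Fin n)), (pairs n S).card = k → R ≤ S →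
    ∃ W : (hasse n).Walk S R,
      walkWeight (logicalEntropy n) W = logicalEntropy n R - logicalEntropy n S := by
  intro k
  induction k using Nat.strong_induction_on with
  | _ k ih =>
    intro S hk hRS
    rcases eq_or_lt_of_le hRS with rfl | hlt
    · exact ⟨SimpleGraph.Walk.nil, by simp [walkWeight_nil]⟩
    · obtain ⟨T, hRT, hTS⟩ := exists_le_covBy_of_lt hlt
      have hsub : pairs n T ⊂ pairs n S := by
        refine ⟨pairs_mono hTS.lt.le, fun hc => hTS.lt.ne ?_⟩
        refine le_antisymm hTS.lt.le ?_
        intro x y hxy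
        rcases lt_trichotomy x y with hxy' | rfl | hxy'
        · have hmem : (x, y) ∈ pairs n S := by
            simp only [pairs, Finset.mem_filter, Finset.mem_univ, true_and]
            exact ⟨hxy', hxy⟩
          have := hc hmem
          simp only [pairs, Finset.mem_filter] at this
          exact this.2.2
        · exact T.refl' x
        · have hmem : (y, x) ∈ pairs n S := by
            simp only [pairs, Finset.mem_filter, Finset.mem_univ, true_and]
            exact ⟨hxy', S.symm' hxy⟩
          have := hc hmem
          simp only [pairs, Finset.mem_filter] at this
          exact T.symm' this.2.2
      obtain ⟨W, hW⟩ := ih (pairs n T).card (hk ▸ Finset.card_lt_card hsub) T rfl hRT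
      refine ⟨SimpleGraph.Walk.cons (show (hasse n).Adj S T from Or.inr hTS) W, ?_⟩
      rw [walkWeight_cons, hW]
      have hST : logicalEntropy n S ≤ logicalEntropy n T := entropy_anti hn hTS.lt.le
      rw [abs_of_nonpos (by linarith)]
      ring

lemma card_symmDiff_real {γ : Type*} [DecidableEq γ] (A B : Finset γ) :
    ((A ∆ B).card : ℝ) = (A.card : ℝ) + (B.card : ℝ) - 2 * ((A ∩ B).card : ℝ) := by
  have h1 := Finset.card_inter_add_card_sdiff A B
  have h2 := Finset.card_inter_add_card_sdiff B A
  have h3 : (A ∆ B).card = (A \ B).card + (B \ A).card := by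
    rw [symmDiff_def, Finset.sup_eq_union]
    exact Finset.card_union_of_disjoint disjoint_sdiff_sdiff
  have h4 : (B ∩ A).card = (A ∩ B).card := by rw [Finset.inter_comm]
  push_cast [h3]
  have h1' : ((A ∩ B).card : ℝ) + ((A \ B).card : ℝ) = (A.card : ℝ) := by exact_mod_cast h1
  have h2' : ((B ∩ A).card : ℝ) + ((B \ A).card : ℝ) = (B.card : ℝ) := by exact_mod_cast h2
  have h4' : ((B ∩ A).card : ℝ) = ((A ∩ B).card : ℝ) := by exact_mod_cast h4
  linarith

/-- The logical-entropy-based minimum-weight distance satisfies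
`δ_h(P,Q) = 2 h(P ⊓ Q) - h(P) - h(Q)`. -/
theorem deltaW_logicalEntropy (n : ℕ) (hn : 1 ≤ n) (P Q : Setoid (Fin n)) :
    deltaW (logicalEntropy n) P Q =
      2 * logicalEntropy n (P ⊓ Q) - logicalEntropy n P - logicalEntropy n Q := by
  classical
  set t : ℝ := 2 * logicalEntropy n (P ⊓ Q) - logicalEntropy n P - logicalEntropy n Q with ht
  have hn2 : ((n : ℝ) ^ 2) ≠ 0 := by positivity
  -- `t` equals the symmetric-difference bound
  have hteq : t = 2 / ((n : ℝ) ^ 2) * (((pairs n P) ∆ (pairs n Q)).card : ℝ) := by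
    rw [ht, logicalEntropy_eq, logicalEntropy_eq, logicalEntropy_eq,
      card_symmDiff_real, ← pairs_inf]
    field_simp
    ring
  -- the witnessing walk
  obtain ⟨W1, hW1⟩ := exists_walk_down hn (P ⊓ Q) (pairs n P).card P rfl inf_le_left
  obtain ⟨W2, hW2⟩ := exists_walk_down hn (P ⊓ Q) (pairs n Q).card Q rfl inf_le_right
  have hmem : t ∈ {w : ℝ | ∃ W : (hasse n).Walk P Q, walkWeight (logicalEntropy n) W = w} := by
    refine ⟨W1.append W2.reverse, ?_⟩
    rw [walkWeight_append, walkWeight_reverse, hW1, hW2, ht]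
    ring
  have hlb : ∀ w ∈ {w : ℝ | ∃ W : (hasse n).Walk P Q, walkWeight (logicalEntropy n) W = w},
      t ≤ w := by
    rintro w ⟨W, rfl⟩
    rw [hteq]
    exact walk_lb hn W
  exact le_antisymm (csInf_le ⟨t, hlb⟩ hmem) (le_csInf ⟨t, hmem⟩ hlb)
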